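/- For the symmetric interacting urn with a > 0, β > 0: L(x_1,x_2,x_3) = −(x_1+x_2+x_3) + (1/(2a+1))·[a·log(x_1 x_2 x_3) − ((a−1)/β)·log(x_1^β + x_2^β + x_3^β)] satisfies ∂L/∂x_i = F_i(x)/x_i for each i = 1,2,3 at every point with all x_i > 0 and x_1+x_2+x_3 = 1. -/

import Mathlib

noncomputable def symF (a β : ℝ) (i : Fin 3) (x₁ x₂ x₃ : ℝ) : ℝ :=
  let S := x₁ ^ β + x₂ ^ β + x₃ ^ β
  match i with
  | 0 => (x₁ ^ β + a * (x₂ ^ β + x₃ ^ β)) / ((1 + 2 * a) * S) - x₁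
  | 1 => (x₂ ^ β + a * (x₁ ^ β + x₃ ^ β)) / ((1 + 2 * a) * S) - x₂
  | 2 => (x₃ ^ β + a * (x₁ ^ β + x₂ ^ β)) / ((1 + 2 * a) * S) - x₃

noncomputable def L (a β x₁ x₂ x₃ : ℝ) : ℝ :=
  -(x₁ + x₂ + x₃) + (1 / (2 * a + 1)) *
    (a * Real.log (x₁ * x₂ * x₃) - ((a - 1) / β) * Real.log (x₁ ^ β + x₂ ^ β + x₃ ^ β))

theorem L_partial_derivs (a β : ℝ) (ha : 0 < a) (hβ : 0 < β)
    (x₁ x₂ x₃ : ℝ) (h1 : 0 < x₁) (h2 : 0 < x₂) (h3 : 0 < x₃)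
    (hsum : x₁ + x₂ + x₃ = 1) :
    deriv (fun t => L a β t x₂ x₃) x₁ = symF a β 0 x₁ x₂ x₃ / x₁ ∧
    deriv (fun t => L a β x₁ t x₃) x₂ = symF a β 1 x₁ x₂ x₃ / x₂ ∧
    deriv (fun t => L a β x₁ x₂ t) x₃ = symF a β 2 x₁ x₂ x₃ / x₃ := by
  have h2a : (2 * a + 1) ≠ 0 := by positivity
  have h2a' : (1 + 2 * a) ≠ 0 := by positivity
  have hb : β ≠ 0 := hβ.ne'
  have hS : (0:ℝ) < x₁ ^ β + x₂ ^ β + x₃ ^ β := by positivity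
  have hr1 : x₁ ^ (β - 1) = x₁ ^ β / x₁ := by
    rw [Real.rpow_sub h1, Real.rpow_one]
  have hr2 : x₂ ^ (β - 1) = x₂ ^ β / x₂ := by
    rw [Real.rpow_sub h2, Real.rpow_one]
  have hr3 : x₃ ^ (β - 1) = x₃ ^ β / x₃ := by
    rw [Real.rpow_sub h3, Real.rpow_one]
  refine ⟨?_, ?_, ?_⟩
  · have hm : HasDerivAt (fun t : ℝ => t * x₂ * x₃) (x₂ * x₃) x₁ := by
      simpa using ((hasDerivAt_id x₁).mul_const x₂).mul_const x₃
    have hp : HasDerivAt (fun t : ℝ => t ^ β + x₂ ^ β + x₃ ^ β) (β * x₁ ^ (β - 1)) x₁ := by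
      simpa using ((Real.hasDerivAt_rpow_const (p := β) (Or.inl h1.ne')).add_const
        (x₂ ^ β)).add_const (x₃ ^ β)
    have hlog1 := hm.log (by positivity)
    have hlog2 := hp.log hS.ne'
    have hlin : HasDerivAt (fun t : ℝ => -(t + x₂ + x₃)) (-1) x₁ := by
      exact (((hasDerivAt_id x₁).add_const x₂).add_const x₃).neg
    have H := hlin.add (((hlog1.const_mul a).sub (hlog2.const_mul ((a - 1) / β))).const_mul
      (1 / (2 * a + 1)))
    have : deriv (fun t => L a β t x₂ x₃) x₁ =
        -1 + 1 / (2 * a + 1) * (a * (x₂ * x₃ / (x₁ * x₂ * x₃)) -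
          (a - 1) / β * (β * x₁ ^ (β - 1) / (x₁ ^ β + x₂ ^ β + x₃ ^ β))) := by
      exact (H.congr_deriv rfl).deriv
    rw [this, symF, hr1]
    field_simp
    ring
  · have hm : HasDerivAt (fun t : ℝ => x₁ * t * x₃) (x₁ * x₃) x₂ := by
      simpa using (((hasDerivAt_id x₂).const_mul x₁).mul_const x₃)
    have hp : HasDerivAt (fun t : ℝ => x₁ ^ β + t ^ β + x₃ ^ β) (β * x₂ ^ (β - 1)) x₂ := by
      simpa using (((Real.hasDerivAt_rpow_const (p := β) (Or.inl h2.ne')).const_add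
        (x₁ ^ β)).add_const (x₃ ^ β))
    have hlog1 := hm.log (by positivity)
    have hlog2 := hp.log hS.ne'
    have hlin : HasDerivAt (fun t : ℝ => -(x₁ + t + x₃)) (-1) x₂ := by
      exact ((((hasDerivAt_id x₂).const_add x₁)).add_const x₃).neg
    have H := hlin.add (((hlog1.const_mul a).sub (hlog2.const_mul ((a - 1) / β))).const_mul
      (1 / (2 * a + 1)))
    have : deriv (fun t => L a β x₁ t x₃) x₂ =
        -1 + 1 / (2 * a + 1) * (a * (x₁ * x₃ / (x₁ * x₂ * x₃)) -
          (a - 1) / β * (β * x₂ ^ (β - 1) / (x₁ ^ β + x₂ ^ β + x₃ ^ β))) := by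
      exact H.deriv
    rw [this, symF, hr2]
    field_simp
    ring
  · have hm : HasDerivAt (fun t : ℝ => x₁ * x₂ * t) (x₁ * x₂) x₃ := by
      simpa using ((hasDerivAt_id x₃).const_mul (x₁ * x₂))
    have hp : HasDerivAt (fun t : ℝ => x₁ ^ β + x₂ ^ β + t ^ β) (β * x₃ ^ (β - 1)) x₃ := by
      simpa using ((Real.hasDerivAt_rpow_const (p := β) (Or.inl h3.ne')).const_add
        (x₁ ^ β + x₂ ^ β))
    have hlog1 := hm.log (by positivity)
    have hlog2 := hp.log hS.ne'
    have hlin : HasDerivAt (fun t : ℝ => -(x₁ + x₂ + t)) (-1) x₃ := by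
      exact ((hasDerivAt_id x₃).const_add (x₁ + x₂)).neg
    have H := hlin.add (((hlog1.const_mul a).sub (hlog2.const_mul ((a - 1) / β))).const_mul
      (1 / (2 * a + 1)))
    have : deriv (fun t => L a β x₁ x₂ t) x₃ =
        -1 + 1 / (2 * a + 1) * (a * (x₁ * x₂ / (x₁ * x₂ * x₃)) -
          (a - 1) / β * (β * x₃ ^ (β - 1) / (x₁ ^ β + x₂ ^ β + x₃ ^ β))) := by
      exact H.deriv
    rw [this, symF, hr3]
    field_simp
    ring
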